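/- If φ: M_n → M_m is a (k+1)-positive linear map, then id_k ⊗ φ: M_{kn} → M_{km} is a generalized Schwarz map, i.e., for every X ∈ M_{kn}, the block matrix [[(id_k⊗φ)(1_{kn}), (id_k⊗φ)(X)],[(id_k⊗φ)(X)*, (id_k⊗φ)(X*X)]] is positive semidefinite. -/

import Mathlib

open Matrix ComplexOrder

/-- The map `id_k ⊗ φ` acting blockwise. -/
def blockMap {n m : ℕ} (k : ℕ)
    (φ : Matrix (Fin n) (Fin n) ℂ →ₗ[ℂ] Matrix (Fin m) (Fin m) ℂ)
    (M : Matrix (Fin k × Fin n) (Fin k × Fin n) ℂ) :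
    Matrix (Fin k × Fin m) (Fin k × Fin m) ℂ :=
  fun p q => φ (fun a b => M (p.1, a) (q.1, b)) p.2 q.2

/-- Row `l` of the "column" matrix `[1, X]`. -/
def Cmat {n : ℕ} (k : ℕ) (X : Matrix (Fin k × Fin n) (Fin k × Fin n) ℂ) (l : Fin k) :
    Matrix (Fin n) (Fin (k + 1) × Fin n) ℂ :=
  fun e sb => Fin.cases (if e = sb.2 then (1 : ℂ) else 0) (fun j => X (l, e) (j, sb.2)) sb.1

/-- Coefficient part of the compression matrix. -/
def coefG {k m : ℕ} (l : Fin k) : (Fin k × Fin m ⊕ Fin k × Fin m) → ℂ :=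
  Sum.elim (fun ip => if ip.1 = l then 1 else 0) (fun _ => 1)

/-- Target index part of the compression matrix. -/
def tgtG {k m : ℕ} : (Fin k × Fin m ⊕ Fin k × Fin m) → Fin (k + 1) × Fin m :=
  Sum.elim (fun ip => ((0 : Fin (k + 1)), ip.2)) (fun jp => (jp.1.succ, jp.2))

/-- Compression matrix. -/
def Gmat (k m : ℕ) (l : Fin k) :
    Matrix (Fin k × Fin m ⊕ Fin k × Fin m) (Fin (k + 1) × Fin m) ℂ :=
  fun x c => coefG l x * (if c = tgtG x then 1 else 0)

lemma GNG {k m : ℕ} (l : Fin k) (N : Matrix (Fin (k + 1) × Fin m) (Fin (k + 1) × Fin m) ℂ)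
    (x y : Fin k × Fin m ⊕ Fin k × Fin m) :
    (Gmat k m l * N * (Gmat k m l)ᴴ) x y
      = coefG l x * star (coefG l y) * N (tgtG x) (tgtG y) := by
  simp only [Matrix.mul_apply, conjTranspose_apply, Gmat, star_mul', star_one, star_zero]
  simp [mul_ite, ite_mul, mul_zero, zero_mul, Finset.mul_sum, mul_comm, mul_left_comm]
  ring

set_option maxHeartbeats 1000000 in
theorem blockMap_isGenSchwarz_of_succ_positive {n m : ℕ} (k : ℕ)
    (φ : Matrix (Fin n) (Fin n) ℂ →ₗ[ℂ] Matrix (Fin m) (Fin m) ℂ)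
    (hφ : ∀ M : Matrix (Fin (k + 1) × Fin n) (Fin (k + 1) × Fin n) ℂ,
      M.PosSemidef → (blockMap (k + 1) φ M).PosSemidef) :
    ∀ X : Matrix (Fin k × Fin n) (Fin k × Fin n) ℂ,
      (Matrix.fromBlocks (blockMap k φ 1) (blockMap k φ X)
        (blockMap k φ X)ᴴ (blockMap k φ (Xᴴ * X))).PosSemidef := by
  intro X
  have collapse : ∀ (f : Fin k → ℂ) (i : Fin k),
      (∑ l, (if i = l then (1 : ℂ) else 0) * f l) = f i := by
    intro f i
    rw [Finset.sum_eq_single i]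
    · simp
    · intro b _ hb
      rw [if_neg fun h => hb h.symm, zero_mul]
    · simp
  set M : Fin k → Matrix (Fin (k + 1) × Fin n) (Fin (k + 1) × Fin n) ℂ :=
    fun l => (Cmat k X l)ᴴ * (Cmat k X l) with hMdef
  have hM : ∀ l, (M l).PosSemidef := fun l => posSemidef_conjTranspose_mul_self _
  set N : Fin k → Matrix (Fin (k + 1) × Fin m) (Fin (k + 1) × Fin m) ℂ :=
    fun l => blockMap (k + 1) φ (M l) with hNdef
  have hN : ∀ l, (N l).PosSemidef := fun l => hφ _ (hM l)
  have hMent : ∀ (l : Fin k) (s t : Fin (k + 1)) (a b : Fin n),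
      M l (s, a) (t, b) = ∑ e, star (Cmat k X l e (s, a)) * Cmat k X l e (t, b) := by
    intro l s t a b
    simp [hMdef, Matrix.mul_apply, conjTranspose_apply]
  have hM00 : ∀ l : Fin k,
      (fun a b => M l (0, a) (0, b)) = (1 : Matrix (Fin n) (Fin n) ℂ) := by
    intro l
    ext a b
    simp [hMent, Cmat, Matrix.one_apply, eq_comm]
  have hM0s : ∀ (l : Fin k) (j : Fin k),
      (fun a b => M l (0, a) (j.succ, b)) = fun a b => X (l, a) (j, b) := by
    intro l j
    ext a b
    simp [hMent, Cmat]
  have hMss : ∀ (l i j : Fin k),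
      (fun a b => M l (i.succ, a) (j.succ, b))
        = fun a b => ∑ e, star (X (l, e) (i, a)) * X (l, e) (j, b) := by
    intro l i j
    ext a b
    simp [hMent, Cmat]
  have key : Matrix.fromBlocks (blockMap k φ 1) (blockMap k φ X)
        (blockMap k φ X)ᴴ (blockMap k φ (Xᴴ * X))
      = ∑ l, Gmat k m l * N l * (Gmat k m l)ᴴ := by
    ext x y
    rw [Matrix.sum_apply]
    simp only [GNG]
    cases x with
    | inl x =>
      obtain ⟨i, p⟩ := x
      cases y with
      | inl y =>
        obtain ⟨j, q⟩ := y
        simp only [coefG, tgtG, Sum.elim_inl, fromBlocks_apply₁₁,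
          apply_ite (star : ℂ → ℂ), star_one, star_zero, mul_assoc]
        rw [collapse]
        by_cases h : j = i
        · subst h
          rw [if_pos rfl, one_mul]
          simp only [hNdef, blockMap]
          rw [hM00]
          have h1 : (fun a b => (1 : Matrix (Fin k × Fin n) (Fin k × Fin n) ℂ) (j, a) (j, b))
              = (1 : Matrix (Fin n) (Fin n) ℂ) := by
            ext a b
            simp [Matrix.one_apply, Prod.ext_iff]
          rw [h1]
        · rw [if_neg h, zero_mul]
          simp only [blockMap]
          have h0 : (fun a b => (1 : Matrix (Fin k × Fin n) (Fin k × Fin n) ℂ) (i, a) (j, b))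
              = (0 : Matrix (Fin n) (Fin n) ℂ) := by
            ext a b
            simp [Matrix.one_apply, Prod.ext_iff, Ne.symm h]
          rw [h0, map_zero]
          rfl
      | inr y =>
        obtain ⟨j, q⟩ := y
        simp only [coefG, tgtG, Sum.elim_inl, Sum.elim_inr, star_one, mul_one,
          fromBlocks_apply₁₂]
        rw [collapse]
        simp only [hNdef, blockMap]
        rw [hM0s]
    | inr x =>
      obtain ⟨i, p⟩ := x
      cases y with
      | inl y =>
        obtain ⟨j, q⟩ := y
        simp only [coefG, tgtG, Sum.elim_inl, Sum.elim_inr, fromBlocks_apply₂₁,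
          conjTranspose_apply, apply_ite (star : ℂ → ℂ), star_one, star_zero, one_mul]
        rw [collapse]
        have h1 : blockMap k φ X (j, q) (i, p) = N j (0, q) (i.succ, p) := by
          simp only [hNdef, blockMap]
          rw [hM0s]
        rw [h1]
        exact (hN j).1.apply _ _
      | inr y =>
        obtain ⟨j, q⟩ := y
        simp only [coefG, tgtG, Sum.elim_inr, star_one, one_mul, mul_one,
          fromBlocks_apply₂₂]
        have hsum : ∀ l : Fin k, N l (i.succ, p) (j.succ, q)
            = φ ((fun a b => ∑ e, star (X (l, e) (i, a)) * X (l, e) (j, b)) :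
                Matrix (Fin n) (Fin n) ℂ) p q := by
          intro l
          simp only [hNdef, blockMap]
          rw [hMss]
        rw [Finset.sum_congr rfl fun l _ => hsum l]
        rw [show (∑ l : Fin k, φ ((fun a b => ∑ e, star (X (l, e) (i, a)) * X (l, e) (j, b)) :
              Matrix (Fin n) (Fin n) ℂ) p q)
            = φ (∑ l : Fin k, ((fun a b => ∑ e, star (X (l, e) (i, a)) * X (l, e) (j, b)) :
              Matrix (Fin n) (Fin n) ℂ)) p q by
              have h := congrFun (congrFun (map_sum φ (fun l : Fin k =>
                ((fun a b => ∑ e, star (X (l, e) (i, a)) * X (l, e) (j, b)) :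
                  Matrix (Fin n) (Fin n) ℂ)) Finset.univ) p) q
              rw [Matrix.sum_apply] at h
              exact h.symm]
        simp only [blockMap]
        have h1 : (fun a b => (Xᴴ * X) (i, a) (j, b))
            = (∑ l : Fin k, ((fun a b => ∑ e, star (X (l, e) (i, a)) * X (l, e) (j, b)) :
                Matrix (Fin n) (Fin n) ℂ)) := by
          ext a b
          simp [Matrix.mul_apply, conjTranspose_apply, Fintype.sum_prod_type, Matrix.sum_apply]
        rw [h1]
        rfl
  rw [key]
  apply Finset.sum_induction _ _ (fun A B hA hB => hA.add hB) Matrix.PosSemidef.zero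
  intro l _
  exact (hN l).mul_mul_conjTranspose_same _
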